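/- For every n : ℕ and all p, q, r, s : Fin n → ZMod 2, the Pauli word matrices satisfy M(p,q) * M(r,s) = (-1)^(p·s + q·r) • (M(r,s) * M(p,q)), where (-1)^x means -1 if x = 1 and 1 if x = 0 in ZMod 2. In particular, M(p,q) and M(r,s) commute if and only if the symplectic product p·s + q·r equals 0 in ZMod 2. -/

import Mathlib

/-- The sign `(-1)^x` for `x : ZMod 2`: `-1` if `x = 1` and `1` if `x = 0`. -/
noncomputable def msign (x : ZMod 2) : ℂ := if x = 1 then -1 else 1

/-- The dot product `q · b = ∑ i, q i * b i` in `ZMod 2`. -/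
def zdot {n : ℕ} (q b : Fin n → ZMod 2) : ZMod 2 := ∑ i, q i * b i

/-- The Pauli word matrix `M(p,q)`, representing `X^{p₁}Z^{q₁} ⊗ ⋯ ⊗ X^{pₙ}Z^{qₙ}`:
its `(a,b)` entry is `(-1)^(q·b)` if `a = b + p` and `0` otherwise. -/
noncomputable def pauliM {n : ℕ} (p q : Fin n → ZMod 2) :
    Matrix (Fin n → ZMod 2) (Fin n → ZMod 2) ℂ :=
  fun a b => if a = b + p then msign (zdot q b) else 0

lemma msign_add (x y : ZMod 2) : msign (x + y) = msign x * msign y := by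
  rcases (show ∀ z : ZMod 2, z = 0 ∨ z = 1 by decide) x with rfl | rfl <;>
    rcases (show ∀ z : ZMod 2, z = 0 ∨ z = 1 by decide) y with rfl | rfl <;> simp +decide [msign]

lemma msign_ne_zero (x : ZMod 2) : msign x ≠ 0 := by
  fin_cases x <;> simp [msign] <;> split_ifs <;> norm_num

lemma zdot_comm {n : ℕ} (p q : Fin n → ZMod 2) : zdot p q = zdot q p := by
  simp [zdot, mul_comm]

lemma zdot_add_right {n : ℕ} (q b r : Fin n → ZMod 2) :
    zdot q (b + r) = zdot q b + zdot q r := by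
  simp [zdot, mul_add, Finset.sum_add_distrib]

lemma pauliM_mul_apply {n : ℕ} (p q r s a b : Fin n → ZMod 2) :
    (pauliM p q * pauliM r s) a b =
      if a = b + r + p then msign (zdot q (b + r)) * msign (zdot s b) else 0 := by
  rw [Matrix.mul_apply, Finset.sum_eq_single (b + r)]
  · simp [pauliM]
  · intro c _ hc; simp [pauliM, hc]
  · simp

/-- Pauli words commute up to the sign given by the symplectic product:
`M(p,q) * M(r,s) = (-1)^(p·s + q·r) • (M(r,s) * M(p,q))`; in particular they commute
iff the symplectic product `p·s + q·r` vanishes in `ZMod 2`. -/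
theorem pauliM_mul_comm_symplectic (n : ℕ) (p q r s : Fin n → ZMod 2) :
    pauliM p q * pauliM r s = msign (zdot p s + zdot q r) • (pauliM r s * pauliM p q) ∧
      (pauliM p q * pauliM r s = pauliM r s * pauliM p q ↔ zdot p s + zdot q r = 0) := by
  have h1 : pauliM p q * pauliM r s = msign (zdot p s + zdot q r) • (pauliM r s * pauliM p q) := by
    ext a b
    rw [Matrix.smul_apply, pauliM_mul_apply, pauliM_mul_apply, smul_eq_mul]
    have e : b + p + r = b + r + p := by ring
    rw [e]
    split_ifs with h
    · rw [← msign_add, ← msign_add, ← msign_add, zdot_add_right q b r, zdot_add_right s b p,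
        zdot_comm p s]
      congr 1
      generalize zdot q b = A
      generalize zdot q r = B
      generalize zdot s b = C
      generalize zdot s p = D
      revert A B C D; decide
    · simp
  refine ⟨h1, ?_, ?_⟩
  · intro heq
    rw [heq] at h1
    have h2 := congrFun (congrFun h1 (0 + p + r)) 0
    rw [Matrix.smul_apply, pauliM_mul_apply, smul_eq_mul, if_pos rfl] at h2
    have hv := mul_ne_zero (msign_ne_zero (zdot s (0 + p))) (msign_ne_zero (zdot q 0))
    have hs : msign (zdot p s + zdot q r) = 1 :=
      mul_right_cancel₀ hv (by rw [one_mul]; exact h2.symm)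
    generalize hT : zdot p s + zdot q r = T at hs
    fin_cases T
    · rfl
    · simp [msign] at hs
      exact absurd (hs rfl) (by norm_num)
  · intro ht
    rw [h1, ht]
    simp [msign]
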